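/- Let F ∈ S^m(ℝ[x]) be a symmetric univariate polynomial matrix. Then F(x) is positive semidefinite for all x ∈ [0,∞) if and only if there exist a nonzero polynomial b ∈ ℝ[x] and polynomial matrices U, V ∈ ℝ[x]^{m×m} such that b(x)²·F(x) = U(x)ᵀU(x) + x·V(x)ᵀV(x). -/

import Mathlib

open Matrix Polynomial

open Filter in
lemma cont_nonneg (f : ℝ → ℝ) (hf : Continuous f) (s : Finset ℝ)
    (h : ∀ x, 0 ≤ x → x ∉ s → 0 ≤ f x) : ∀ x, 0 ≤ x → 0 ≤ f x := by
  intro x hx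
  haveI : (nhdsWithin x (Set.Ioi x)).NeBot := inferInstance
  have ht : Filter.Tendsto f (nhdsWithin x (Set.Ioi x)) (nhds (f x)) :=
    hf.continuousAt.tendsto.mono_left nhdsWithin_le_nhds
  refine ge_of_tendsto ht ?_
  have hev : ∀ᶠ y in nhdsWithin x (Set.Ioi x), ∀ a ∈ s, y ≠ a := by
    rw [Filter.eventually_all_finset]
    intro a _
    rcases eq_or_ne x a with rfl | hxa
    · exact eventually_mem_nhdsWithin.mono fun y hy => ne_of_gt hy
    · exact (eventually_ne_nhds hxa).filter_mono nhdsWithin_le_nhds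
  filter_upwards [hev, eventually_mem_nhdsWithin] with y h1 h2
  exact h y (le_of_lt (lt_of_le_of_lt hx h2)) (fun hy => h1 y hy rfl)

lemma cs_psd {m : ℕ} (A : Matrix (Fin m) (Fin m) ℝ) (hsym : Aᵀ = A)
    (hpsd : ∀ u, 0 ≤ u ⬝ᵥ A.mulVec u) (u v : Fin m → ℝ) :
    (u ⬝ᵥ A.mulVec v)^2 ≤ (u ⬝ᵥ A.mulVec u) * (v ⬝ᵥ A.mulVec v) := by
  have hs : ∀ w z : Fin m → ℝ, w ⬝ᵥ A.mulVec z = z ⬝ᵥ A.mulVec w := by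
    intro w z
    simp only [dotProduct, Matrix.mulVec, Finset.mul_sum]
    rw [Finset.sum_comm]
    refine Finset.sum_congr rfl fun i _ => Finset.sum_congr rfl fun j _ => ?_
    have hij : A j i = A i j := congrFun (congrFun hsym i) j
    rw [hij]; ring
  have key : ∀ t : ℝ, 0 ≤ (v ⬝ᵥ A.mulVec v) * (t*t) + (2 * (u ⬝ᵥ A.mulVec v)) * t + (u ⬝ᵥ A.mulVec u) := by
    intro t
    have h0 := hpsd (u + t • v)
    rw [Matrix.mulVec_add, Matrix.mulVec_smul, add_dotProduct, smul_dotProduct,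
      dotProduct_add, dotProduct_add, dotProduct_smul, dotProduct_smul,
      hs v u] at h0
    simp only [smul_eq_mul] at h0
    nlinarith [h0]
  have := discrim_le_zero key
  rw [discrim] at this
  nlinarith [this]

lemma mul_norm_rep {A B p q f g : Polynomial ℝ} (hf : f = A^2 + X*B^2)
    (hg : g = p^2 + X*q^2) :
    f*g = (A*p - X*B*q)^2 + X*(A*q+B*p)^2 := by
  subst hf hg; ring

lemma quad_dvd (f : Polynomial ℝ) (z : ℂ) (him : z.im ≠ 0)
    (hroot : Polynomial.aeval z f = 0) :
    (X^2 - C (2*z.re) * X + C (Complex.normSq z)) ∣ f := by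
  set Q : Polynomial ℝ := X^2 - C (2*z.re) * X + C (Complex.normSq z) with hQ
  have hmonic : Q.Monic := by
    unfold Q
    monicity!
  have hmap : Q.map (algebraMap ℝ ℂ) = (X - C z) * (X - C ((starRingEnd ℂ) z)) := by
    have h1 : ((2*z.re : ℝ) : ℂ) = z + (starRingEnd ℂ) z := (Complex.add_conj z).symm
    have h2 : ((Complex.normSq z : ℝ) : ℂ) = z * (starRingEnd ℂ) z := (Complex.mul_conj z).symm
    simp only [hQ, Polynomial.map_add, Polynomial.map_sub, Polynomial.map_pow,
      Polynomial.map_mul, Polynomial.map_X, Polynomial.map_C, Complex.coe_algebraMap]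
    rw [h1, h2, C_add, C_mul]
    ring
  rw [← map_dvd_map (algebraMap ℝ ℂ) (algebraMap ℝ ℂ).injective hmonic, hmap]
  have hr1 : (f.map (algebraMap ℝ ℂ)).IsRoot z := by
    rwa [Polynomial.IsRoot, Polynomial.eval_map, ← Polynomial.aeval_def]
  obtain ⟨g, hg⟩ := Polynomial.dvd_iff_isRoot.mpr hr1
  have hr2 : (f.map (algebraMap ℝ ℂ)).IsRoot ((starRingEnd ℂ) z) := by
    have : Polynomial.aeval (Complex.conjAe z) f = Complex.conjAe (Polynomial.aeval z f) :=
      Polynomial.aeval_algHom_apply Complex.conjAe.toAlgHom z f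
    rw [hroot, map_zero] at this
    rw [Polynomial.IsRoot, Polynomial.eval_map, ← Polynomial.aeval_def]
    exact this
  have hzz : (starRingEnd ℂ) z ≠ z := by
    intro hc
    have h := congrArg Complex.im hc
    rw [Complex.conj_im] at h
    exact him (by linarith)
  have hr3 : g.IsRoot ((starRingEnd ℂ) z) := by
    have := hr2
    rw [hg] at this
    simp only [Polynomial.IsRoot, Polynomial.eval_mul, Polynomial.eval_sub,
      Polynomial.eval_X, Polynomial.eval_C] at this ⊢
    rcases mul_eq_zero.mp this with h | h
    · exact absurd (sub_eq_zero.mp h) hzz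
    · exact h
  obtain ⟨h, hh⟩ := Polynomial.dvd_iff_isRoot.mpr hr3
  exact ⟨h, by rw [hg, hh]; ring⟩

lemma scalar_rep_aux : ∀ (n : ℕ) (f : Polynomial ℝ), f.natDegree = n →
    (∀ x : ℝ, 0 ≤ x → 0 ≤ f.eval x) → ∃ p q : Polynomial ℝ, f = p^2 + X * q^2 := by
  intro n
  induction n using Nat.strong_induction_on with
  | _ n ih =>
  intro f hdeg hf
  rcases eq_or_ne f 0 with rfl | hf0
  · exact ⟨0, 0, by ring⟩
  by_cases hd0 : f.natDegree = 0
  · refine ⟨C (Real.sqrt (f.coeff 0)), 0, ?_⟩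
    have hc : 0 ≤ f.coeff 0 := by
      have := hf 0 le_rfl
      rwa [← Polynomial.coeff_zero_eq_eval_zero] at this
    conv_lhs => rw [Polynomial.eq_C_of_natDegree_eq_zero hd0]
    rw [← Polynomial.C_pow, Real.sq_sqrt hc]
    ring
  have hdpos : 0 < f.natDegree := Nat.pos_of_ne_zero hd0
  obtain ⟨z, hz⟩ := Complex.exists_root (f := f.map (algebraMap ℝ ℂ)) (by
    rw [Polynomial.degree_map_eq_of_injective (algebraMap ℝ ℂ).injective]
    exact Polynomial.natDegree_pos_iff_degree_pos.mp hdpos)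
  by_cases him : z.im = 0
  · -- real root r
    set r := z.re with hr
    have hzr : z = (r : ℂ) := Complex.ext rfl (by simp [him])
    have hroot : f.IsRoot r := by
      have h1 : (algebraMap ℝ ℂ) (f.eval r) = 0 := by
        rw [← Polynomial.eval₂_at_apply, ← Polynomial.eval_map]
        rw [hzr] at hz
        exact hz
      exact (map_eq_zero_iff (algebraMap ℝ ℂ) (algebraMap ℝ ℂ).injective).mp h1
    obtain ⟨g, hg⟩ := Polynomial.dvd_iff_isRoot.mpr hroot
    have hgne : g ≠ 0 := by rintro rfl; rw [mul_zero] at hg; exact hf0 hg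
    have hXrne : (X - C r : ℝ[X]) ≠ 0 := Polynomial.X_sub_C_ne_zero r
    have hdg : g.natDegree < n := by
      rw [← hdeg, hg, Polynomial.natDegree_mul hXrne hgne, Polynomial.natDegree_X_sub_C]
      omega
    rcases lt_trichotomy r 0 with hrn | hrz | hrp
    · -- r < 0
      have hgnn : ∀ x : ℝ, 0 ≤ x → 0 ≤ g.eval x := by
        intro x hx
        have h1 := hf x hx
        rw [hg, Polynomial.eval_mul, Polynomial.eval_sub, Polynomial.eval_X,
          Polynomial.eval_C] at h1
        exact (mul_nonneg_iff_of_pos_left (by linarith : (0:ℝ) < x - r)).mp h1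
      obtain ⟨p, q, hpq⟩ := ih g.natDegree hdg g rfl hgnn
      have hfac : (X - C r : ℝ[X]) = (C (Real.sqrt (-r)))^2 + X * 1^2 := by
        rw [← Polynomial.C_pow, Real.sq_sqrt (by linarith : (0:ℝ) ≤ -r), map_neg]
        ring
      exact ⟨_, _, by rw [hg]; exact mul_norm_rep hfac hpq⟩
    · -- r = 0
      have hgnn : ∀ x : ℝ, 0 ≤ x → 0 ≤ g.eval x := by
        apply cont_nonneg _ g.continuous {0}
        intro x hx hxs
        have hxpos : 0 < x := lt_of_le_of_ne hx (by simpa [eq_comm] using hxs)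
        have h1 := hf x hx
        rw [hg, Polynomial.eval_mul, Polynomial.eval_sub, Polynomial.eval_X,
          Polynomial.eval_C] at h1
        exact (mul_nonneg_iff_of_pos_left (by rw [hrz]; linarith : (0:ℝ) < x - r)).mp h1
      obtain ⟨p, q, hpq⟩ := ih g.natDegree hdg g rfl hgnn
      have hfac : (X - C r : ℝ[X]) = (0:ℝ[X])^2 + X * 1^2 := by rw [hrz, map_zero]; ring
      exact ⟨_, _, by rw [hg]; exact mul_norm_rep hfac hpq⟩
    · -- r > 0
      have hder : g.IsRoot r := by
        have hmin : IsLocalMin (fun x => Polynomial.eval x f) r := by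
          have hev : ∀ᶠ y in nhds r, 0 < y := eventually_gt_nhds hrp
          refine hev.mono fun y hy => ?_
          show Polynomial.eval r f ≤ Polynomial.eval y f
          rw [show Polynomial.eval r f = 0 from hroot]
          exact hf y hy.le
        have h2 := hmin.deriv_eq_zero
        rw [Polynomial.deriv] at h2
        have h3 : Polynomial.derivative f = g + (X - C r) * Polynomial.derivative g := by
          rw [hg, Polynomial.derivative_mul, Polynomial.derivative_X_sub_C, one_mul]
        rw [h3] at h2
        simpa using h2
      obtain ⟨h, hh⟩ := Polynomial.dvd_iff_isRoot.mpr hder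
      have hfh : f = (X - C r)^2 * h := by rw [hg, hh]; ring
      have hhne : h ≠ 0 := by rintro rfl; rw [mul_zero] at hfh; exact hf0 hfh
      have hdh : h.natDegree < n := by
        rw [← hdeg, hfh, Polynomial.natDegree_mul (pow_ne_zero 2 hXrne) hhne,
          Polynomial.natDegree_pow, Polynomial.natDegree_X_sub_C]
        omega
      have hhnn : ∀ x, 0 ≤ x → 0 ≤ h.eval x := by
        apply cont_nonneg _ h.continuous {r}
        intro x hx hxs
        have hxr : x - r ≠ 0 := sub_ne_zero.mpr (by simpa using hxs)
        have h1 := hf x hx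
        rw [hfh, Polynomial.eval_mul, Polynomial.eval_pow, Polynomial.eval_sub,
          Polynomial.eval_X, Polynomial.eval_C] at h1
        exact (mul_nonneg_iff_of_pos_left (by positivity : (0:ℝ) < (x - r)^2)).mp h1
      obtain ⟨p, q, hpq⟩ := ih h.natDegree hdh h rfl hhnn
      have hfac : ((X - C r : ℝ[X]))^2 = ((X - C r))^2 + X * 0^2 := by ring
      exact ⟨_, _, by rw [hfh]; exact mul_norm_rep hfac hpq⟩
  · -- nonreal root
    have haev : Polynomial.aeval z f = 0 := by
      rw [Polynomial.aeval_def, ← Polynomial.eval_map]; exact hz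
    obtain ⟨g, hg⟩ := quad_dvd f z him haev
    set Q : Polynomial ℝ := X^2 - C (2*z.re) * X + C (Complex.normSq z) with hQ
    have hQpos : ∀ x : ℝ, 0 < Q.eval x := by
      intro x
      have he : Q.eval x = (x - z.re)^2 + z.im^2 := by
        simp [hQ, Complex.normSq_apply]; ring
      rw [he]
      have h1 : (0:ℝ) < z.im^2 := by positivity
      nlinarith [sq_nonneg (x - z.re)]
    have hQne : Q ≠ 0 := fun hc => by simpa [hc] using (hQpos 0)
    have hgne : g ≠ 0 := by rintro rfl; rw [mul_zero] at hg; exact hf0 hg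
    have hQdeg : Q.natDegree = 2 := by unfold Q; compute_degree!
    have hdg : g.natDegree < n := by
      rw [← hdeg, hg, Polynomial.natDegree_mul hQne hgne, hQdeg]; omega
    have hgnn : ∀ x, 0 ≤ x → 0 ≤ g.eval x := by
      intro x hx
      have h1 := hf x hx
      rw [hg, Polynomial.eval_mul] at h1
      exact (mul_nonneg_iff_of_pos_left (hQpos x)).mp h1
    obtain ⟨p, q, hpq⟩ := ih g.natDegree hdg g rfl hgnn
    set t := Real.sqrt (Complex.normSq z) with hts
    have htnn : 0 ≤ Complex.normSq z := Complex.normSq_nonneg z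
    have ht2 : t^2 = Complex.normSq z := Real.sq_sqrt htnn
    have htre : z.re ≤ t := by
      have h5 : Real.sqrt (z.re^2) ≤ t :=
        Real.sqrt_le_sqrt (by rw [Complex.normSq_apply]; nlinarith [sq_nonneg z.im])
      rw [Real.sqrt_sq_eq_abs] at h5
      linarith [le_abs_self z.re]
    set s := Real.sqrt (2*t - 2*z.re) with hss
    have hs2 : s^2 = 2*t - 2*z.re := Real.sq_sqrt (by linarith)
    have hfac : Q = (X - C t)^2 + X * (C s)^2 := by
      have h1 : (C t : Polynomial ℝ)^2 = C (Complex.normSq z) := by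
        rw [← Polynomial.C_pow, ht2]
      have h2 : (C s : Polynomial ℝ)^2 = 2 * C t - C (2*z.re) := by
        rw [← Polynomial.C_pow, hs2]
        simp [_root_.map_sub, _root_.map_mul, _root_.map_ofNat]
      rw [hQ]
      linear_combination -h1 - X * h2
    exact ⟨_, _, by rw [hg]; exact mul_norm_rep hfac hpq⟩

lemma scalar_rep (f : Polynomial ℝ) (hf : ∀ x : ℝ, 0 ≤ x → 0 ≤ f.eval x) :
    ∃ p q : Polynomial ℝ, f = p^2 + X * q^2 :=
  scalar_rep_aux f.natDegree f rfl hf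

lemma backward_dir {m : ℕ} (F : Matrix (Fin m) (Fin m) (Polynomial ℝ))
    (b : Polynomial ℝ) (hb : b ≠ 0) (U V : Matrix (Fin m) (Fin m) (Polynomial ℝ))
    (h : b ^ 2 • F = Uᵀ * U + (Polynomial.X : Polynomial ℝ) • (Vᵀ * V)) :
    ∀ x : ℝ, 0 ≤ x → ∀ u : Fin m → ℝ,
      0 ≤ u ⬝ᵥ (F.map (fun p => p.eval x)).mulVec u := by
  intro x hx u
  refine cont_nonneg (fun y => u ⬝ᵥ (F.map (fun p => p.eval y)).mulVec u) ?_
    b.roots.toFinset ?_ x hx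
  · have heq : (fun y => u ⬝ᵥ (F.map (fun p => p.eval y)).mulVec u)
        = fun y => ∑ i, u i * ∑ j, (F i j).eval y * u j := rfl
    rw [heq]
    refine continuous_finset_sum _ fun i _ => (continuous_const.mul ?_)
    exact continuous_finset_sum _ fun j _ => ((F i j).continuous.mul continuous_const)
  · intro y hy hys
    have hbne : b.eval y ≠ 0 := by
      intro hc
      exact hys (Multiset.mem_toFinset.mpr ((Polynomial.mem_roots hb).mpr hc))
    set φ := Polynomial.evalRingHom y with hφ
    set A := F.map (fun p => p.eval y) with hA
    have h' : (b.eval y)^2 • A = (U.map φ)ᵀ * (U.map φ) + y • ((V.map φ)ᵀ * (V.map φ)) := by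
      have := congrArg (fun M : Matrix (Fin m) (Fin m) (Polynomial ℝ) => M.map φ) h
      rw [Matrix.map_add _ (fun a b => map_add φ a b)] at this
      have h1 : ((b ^ 2 • F).map ⇑φ) = (b.eval y)^2 • A := by
        ext i j
        simp [hA, Matrix.map_apply, Matrix.smul_apply, smul_eq_mul, hφ]
      have h2 : ((Uᵀ * U).map ⇑φ) = (U.map φ)ᵀ * (U.map φ) := by
        rw [Matrix.map_mul, Matrix.transpose_map]
      have h3 : (((Polynomial.X : Polynomial ℝ) • (Vᵀ * V)).map ⇑φ)
          = y • ((V.map φ)ᵀ * (V.map φ)) := by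
        rw [← Matrix.transpose_map, ← Matrix.map_mul]
        ext i j
        simp [Matrix.map_apply, Matrix.smul_apply, smul_eq_mul, hφ]
      rw [h1, h2, h3] at this
      exact this
    have key : (b.eval y)^2 * (u ⬝ᵥ A.mulVec u)
        = (U.map φ).mulVec u ⬝ᵥ (U.map φ).mulVec u
          + y * ((V.map φ).mulVec u ⬝ᵥ (V.map φ).mulVec u) := by
      have := congrArg (fun M : Matrix (Fin m) (Fin m) ℝ => u ⬝ᵥ M.mulVec u) h'
      rw [Matrix.smul_mulVec, dotProduct_smul, Matrix.add_mulVec,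
        dotProduct_add, Matrix.smul_mulVec, dotProduct_smul] at this
      simp only [smul_eq_mul] at this
      rw [this]
      congr 1
      · rw [← Matrix.mulVec_mulVec, Matrix.dotProduct_mulVec, Matrix.vecMul_transpose]
      · congr 1
        rw [← Matrix.mulVec_mulVec, Matrix.dotProduct_mulVec, Matrix.vecMul_transpose]
    have hnn : 0 ≤ (b.eval y)^2 * (u ⬝ᵥ A.mulVec u) := by
      rw [key]
      have d1 : 0 ≤ (U.map φ).mulVec u ⬝ᵥ (U.map φ).mulVec u :=
        Finset.sum_nonneg fun i _ => mul_self_nonneg _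
      have d2 : 0 ≤ (V.map φ).mulVec u ⬝ᵥ (V.map φ).mulVec u :=
        Finset.sum_nonneg fun i _ => mul_self_nonneg _
      have := hy
      positivity
    have hb2 : (0:ℝ) < (b.eval y)^2 := by positivity
    exact (mul_nonneg_iff_of_pos_left hb2).mp hnn

lemma forward_dir : ∀ (m : ℕ) (F : Matrix (Fin m) (Fin m) (Polynomial ℝ)), Fᵀ = F →
    (∀ x : ℝ, 0 ≤ x → ∀ u : Fin m → ℝ,
        0 ≤ u ⬝ᵥ (F.map (fun p => p.eval x)).mulVec u) →
    ∃ b : Polynomial ℝ, b ≠ 0 ∧ ∃ U V : Matrix (Fin m) (Fin m) (Polynomial ℝ),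
      b ^ 2 • F = Uᵀ * U + (Polynomial.X : Polynomial ℝ) • (Vᵀ * V) := by
  intro m
  induction m with
  | zero =>
    intro F _ _
    refine ⟨1, one_ne_zero, 0, 0, ?_⟩
    ext i j
    exact i.elim0
  | succ k ih =>
    intro F hsym hpsd
    have hFsym : ∀ i j, F j i = F i j := fun i j => congrFun (congrFun hsym i) j
    have hAsym : ∀ x : ℝ, (F.map (fun p => p.eval x))ᵀ = F.map (fun p => p.eval x) := by
      intro x
      rw [← Matrix.transpose_map, hsym]
    have hentry : ∀ (x : ℝ) (i j : Fin (k+1)),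
        (Pi.single i 1 : Fin (k+1) → ℝ) ⬝ᵥ (F.map (fun p => p.eval x)).mulVec (Pi.single j 1)
          = (F i j).eval x := by
      intro x i j
      simp [dotProduct, Matrix.mulVec, Pi.single_apply, Matrix.map_apply,
        Finset.sum_ite_eq', Finset.mul_sum, mul_ite]
    have ha_nn : ∀ x : ℝ, 0 ≤ x → 0 ≤ (F 0 0).eval x := by
      intro x hx
      have h0 := hpsd x hx (Pi.single 0 1)
      rwa [hentry x 0 0] at h0
    by_cases ha : F 0 0 = 0
    · -- first row of F is zero
      have hrow : ∀ j, F 0 j = 0 := by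
        intro j
        apply Polynomial.eq_zero_of_infinite_isRoot
        apply Set.Infinite.mono (s := Set.Ici (0:ℝ))
        · intro x hx
          have hcs := cs_psd (F.map (fun p => p.eval x)) (hAsym x) (hpsd x hx)
            (Pi.single 0 1) (Pi.single j 1)
          rw [hentry x 0 j, hentry x 0 0, hentry x j j, ha] at hcs
          simp only [Polynomial.eval_zero, zero_mul] at hcs
          have : (F 0 j).eval x = 0 := by nlinarith [sq_nonneg ((F 0 j).eval x)]
          exact this
        · exact Set.Ici_infinite 0
      have hrow' : ∀ i, F i 0 = 0 := fun i => by rw [hFsym 0 i]; exact hrow i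
      set F' := F.submatrix (Fin.succ : Fin k → Fin (k+1)) Fin.succ with hF'
      have hsym' : F'ᵀ = F' := by
        refine Matrix.ext fun i j => ?_
        exact hFsym i.succ j.succ
      have hpsd' : ∀ x : ℝ, 0 ≤ x → ∀ u : Fin k → ℝ,
          0 ≤ u ⬝ᵥ (F'.map (fun p => p.eval x)).mulVec u := by
        intro x hx u
        have h0 := hpsd x hx (Fin.cases 0 u)
        have hq : (Fin.cases 0 u : Fin (k+1) → ℝ) ⬝ᵥ
            (F.map (fun p => p.eval x)).mulVec (Fin.cases 0 u)
            = u ⬝ᵥ (F'.map (fun p => p.eval x)).mulVec u := by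
          simp [dotProduct, Matrix.mulVec, Fin.sum_univ_succ, Matrix.map_apply, hF']
        rwa [hq] at h0
      obtain ⟨b, hb, U', V', hUV⟩ := ih F' hsym' hpsd'
      have hUV' : ∀ i j, b^2 * F' i j
          = (∑ r, U' r i * U' r j) + X * (∑ r, V' r i * V' r j) := by
        intro i j
        have h0 := congrFun (congrFun hUV i) j
        simpa [Matrix.mul_apply, Matrix.smul_apply, Matrix.add_apply,
          Matrix.transpose_apply, smul_eq_mul] using h0
      refine ⟨b, hb,
        Matrix.of (fun r i => Fin.cases 0
          (fun r' => Fin.cases 0 (fun i' => U' r' i') i) r),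
        Matrix.of (fun r i => Fin.cases 0
          (fun r' => Fin.cases 0 (fun i' => V' r' i') i) r), ?_⟩
      refine Matrix.ext fun i j => ?_
      simp only [Matrix.smul_apply, Matrix.add_apply, Matrix.mul_apply,
        Matrix.transpose_apply, Matrix.of_apply, smul_eq_mul]
      rcases Fin.eq_zero_or_eq_succ i with rfl | ⟨i', rfl⟩
      · simp [Fin.sum_univ_succ, hrow]
      · rcases Fin.eq_zero_or_eq_succ j with rfl | ⟨j', rfl⟩
        · simp [Fin.sum_univ_succ, hrow' i'.succ]
        · have h0 := hUV' i' j'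
          simp only [hF', Matrix.submatrix_apply] at h0
          simp only [Fin.sum_univ_succ, Fin.cases_zero, Fin.cases_succ, zero_mul, zero_add]
          exact h0
    · -- nonzero pivot
      set G : Matrix (Fin k) (Fin k) (Polynomial ℝ) :=
        Matrix.of (fun i j => F 0 0 * F i.succ j.succ - F 0 i.succ * F 0 j.succ) with hG
      have hGsym : Gᵀ = G := by
        refine Matrix.ext fun i j => ?_
        show G j i = G i j
        simp only [hG, Matrix.of_apply]
        rw [hFsym i.succ j.succ]
        ring
      have hGpsd : ∀ x : ℝ, 0 ≤ x → ∀ u : Fin k → ℝ,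
          0 ≤ u ⬝ᵥ (G.map (fun p => p.eval x)).mulVec u := by
        intro x hx u
        set A := F.map (fun p => p.eval x) with hA
        set w : Fin (k+1) → ℝ := Fin.cases 0 u with hw
        have hT : (Pi.single 0 1 : Fin (k+1) → ℝ) ⬝ᵥ A.mulVec w
            = ∑ j', (F 0 j'.succ).eval x * u j' := by
          simp [dotProduct, Matrix.mulVec, Pi.single_apply, Matrix.map_apply,
            Finset.sum_ite_eq', hA, hw, Fin.sum_univ_succ]
        have hS : w ⬝ᵥ A.mulVec w
            = ∑ i', u i' * ∑ j', (F i'.succ j'.succ).eval x * u j' := by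
          simp [dotProduct, Matrix.mulVec, Matrix.map_apply, hA, hw, Fin.sum_univ_succ]
        have hL : u ⬝ᵥ (G.map (fun p => p.eval x)).mulVec u
            = ∑ i', u i' * ∑ j', ((F 0 0).eval x * (F i'.succ j'.succ).eval x
                - (F 0 i'.succ).eval x * (F 0 j'.succ).eval x) * u j' := by
          simp [dotProduct, Matrix.mulVec, Matrix.map_apply, hG]
        have hkey : u ⬝ᵥ (G.map (fun p => p.eval x)).mulVec u
            = (F 0 0).eval x * (w ⬝ᵥ A.mulVec w)
              - ((Pi.single 0 1 : Fin (k+1) → ℝ) ⬝ᵥ A.mulVec w)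
                * ((Pi.single 0 1 : Fin (k+1) → ℝ) ⬝ᵥ A.mulVec w) := by
          rw [hL, hT, hS, Finset.mul_sum, Finset.sum_mul, ← Finset.sum_sub_distrib]
          refine Finset.sum_congr rfl fun i' _ => ?_
          rw [Finset.mul_sum, Finset.mul_sum, Finset.mul_sum, Finset.mul_sum,
            ← Finset.sum_sub_distrib]
          refine Finset.sum_congr rfl fun j' _ => ?_
          ring
        have hcs := cs_psd A (hAsym x) (hpsd x hx) (Pi.single 0 1) w
        have he0 : (Pi.single 0 1 : Fin (k+1) → ℝ) ⬝ᵥ A.mulVec (Pi.single 0 1)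
            = (F 0 0).eval x := hentry x 0 0
        rw [he0] at hcs
        have hwA : 0 ≤ w ⬝ᵥ A.mulVec w := hpsd x hx w
        rw [hkey]
        nlinarith [hcs, hwA, ha_nn x hx]
      obtain ⟨b', hb', U', V', hUV⟩ := ih G hGsym hGpsd
      obtain ⟨p, q, hapq⟩ := scalar_rep (F 0 0) ha_nn
      have hUV' : ∀ i j, b'^2 * G i j
          = (∑ r, U' r i * U' r j) + X * (∑ r, V' r i * V' r j) := by
        intro i j
        have h0 := congrFun (congrFun hUV i) j
        simpa [Matrix.mul_apply, Matrix.smul_apply, Matrix.add_apply,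
          Matrix.transpose_apply, smul_eq_mul] using h0
      refine ⟨F 0 0 * b', mul_ne_zero ha hb',
        Matrix.of (fun r i => Fin.cases (b' * p * F 0 i)
          (fun r' => Fin.cases 0 (fun i' => p * U' r' i' - X * q * V' r' i') i) r),
        Matrix.of (fun r i => Fin.cases (b' * q * F 0 i)
          (fun r' => Fin.cases 0 (fun i' => q * U' r' i' + p * V' r' i') i) r), ?_⟩
      refine Matrix.ext fun i j => ?_
      simp only [Matrix.smul_apply, Matrix.add_apply, Matrix.mul_apply,
        Matrix.transpose_apply, Matrix.of_apply, smul_eq_mul]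
      rw [Fin.sum_univ_succ, Fin.sum_univ_succ]
      simp only [Fin.cases_zero, Fin.cases_succ]
      rcases Fin.eq_zero_or_eq_succ i with rfl | ⟨i', rfl⟩
      · rcases Fin.eq_zero_or_eq_succ j with rfl | ⟨j', rfl⟩
        · simp only [Fin.cases_zero, zero_mul, mul_zero, Finset.sum_const_zero, add_zero]
          linear_combination ((F 0 0) ^ 2 * b' ^ 2) * hapq
        · simp only [Fin.cases_zero, Fin.cases_succ, zero_mul, Finset.sum_const_zero, add_zero]
          linear_combination ((F 0 0) * b' ^ 2 * F 0 j'.succ) * hapq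
      · rcases Fin.eq_zero_or_eq_succ j with rfl | ⟨j', rfl⟩
        · simp only [Fin.cases_zero, Fin.cases_succ, mul_zero, Finset.sum_const_zero, add_zero]
          rw [hFsym 0 i'.succ]
          linear_combination ((F 0 0) * b' ^ 2 * F 0 i'.succ) * hapq
        · simp only [Fin.cases_succ]
          have e1 : (∑ r', (p * U' r' i' - X * q * V' r' i') * (p * U' r' j' - X * q * V' r' j'))
              = p^2 * (∑ r', U' r' i' * U' r' j') - X*p*q * (∑ r', U' r' i' * V' r' j')
                - X*p*q * (∑ r', V' r' i' * U' r' j')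
                + X^2*q^2 * (∑ r', V' r' i' * V' r' j') := by
            rw [Finset.mul_sum, Finset.mul_sum, Finset.mul_sum, Finset.mul_sum,
              ← Finset.sum_sub_distrib, ← Finset.sum_sub_distrib, ← Finset.sum_add_distrib]
            exact Finset.sum_congr rfl fun r _ => by ring
          have e2 : (∑ r', (q * U' r' i' + p * V' r' i') * (q * U' r' j' + p * V' r' j'))
              = q^2 * (∑ r', U' r' i' * U' r' j') + p*q * (∑ r', U' r' i' * V' r' j')
                + p*q * (∑ r', V' r' i' * U' r' j')
                + p^2 * (∑ r', V' r' i' * V' r' j') := by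
            rw [Finset.mul_sum, Finset.mul_sum, Finset.mul_sum, Finset.mul_sum,
              ← Finset.sum_add_distrib, ← Finset.sum_add_distrib, ← Finset.sum_add_distrib]
            exact Finset.sum_congr rfl fun r _ => by ring
          rw [e1, e2]
          have hGd := hUV' i' j'
          have hGdef : G i' j' = F 0 0 * F i'.succ j'.succ - F 0 i'.succ * F 0 j'.succ := rfl
          rw [hGdef] at hGd
          linear_combination (p^2 + X*q^2) * hGd
            + ((F 0 0) * b'^2 * F i'.succ j'.succ) * hapq

theorem psd_on_halfline_iff (m : ℕ)
    (F : Matrix (Fin m) (Fin m) (Polynomial ℝ)) (hsym : Fᵀ = F) :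
    (∀ x : ℝ, 0 ≤ x → ∀ u : Fin m → ℝ,
        0 ≤ u ⬝ᵥ (F.map (fun p => p.eval x)).mulVec u) ↔
    (∃ b : Polynomial ℝ, b ≠ 0 ∧
      ∃ U V : Matrix (Fin m) (Fin m) (Polynomial ℝ),
        b ^ 2 • F = Uᵀ * U + (Polynomial.X : Polynomial ℝ) • (Vᵀ * V)) := by
  constructor
  · intro h
    exact forward_dir m F hsym h
  · rintro ⟨b, hb, U, V, h⟩
    exact backward_dir F b hb U V h
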